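/- Let {ξ_j} be i.i.d. standard Gaussians, and for d ∈ {2,3}, a_j = (1 + τ² j^{-2/d})^α − 1 ≥ 0 (so ∑ a_j = ∞, ∑ a_j² < ∞), and b_j = log(1 + a_j). Then the series ∑_{j≥1} [a_j ξ_j² − b_j] converges almost surely. -/

import Mathlib

open MeasureTheory ProbabilityTheory Filter
open scoped NNReal ENNReal

section Helpers

/-- almost-everywhere equal processes have the same independence. -/
lemma stmt9_iIndepFun_congr_ae {Ω : Type*} [MeasurableSpace Ω] {P : Measure Ω}
    {f g : ℕ → Ω → ℝ} (h : ∀ i, f i =ᵐ[P] g i)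
    (hf : iIndepFun f P) :
    iIndepFun g P := by
  rw [iIndepFun_iff_measure_inter_preimage_eq_mul] at hf ⊢
  intro S sets hS
  have hall : ∀ᵐ ω ∂P, ∀ i, f i ω = g i ω := ae_all_iff.2 h
  have h2 : (⋂ i ∈ S, f i ⁻¹' sets i) =ᵐ[P] (⋂ i ∈ S, g i ⁻¹' sets i) := by
    filter_upwards [hall] with ω hω
    show (ω ∈ ⋂ i ∈ S, f i ⁻¹' sets i) = (ω ∈ ⋂ i ∈ S, g i ⁻¹' sets i)
    simp only [eq_iff_iff, Set.mem_iInter, Set.mem_preimage]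
    constructor
    · intro H k hk; rw [← hω k]; exact H k hk
    · intro H k hk; rw [hω k]; exact H k hk
  have h1 : ∀ i, P (f i ⁻¹' sets i) = P (g i ⁻¹' sets i) := by
    intro i
    refine measure_congr ?_
    filter_upwards [h i] with ω hω
    show (f i ω ∈ sets i) = (g i ω ∈ sets i)
    rw [hω]
  rw [← measure_congr h2, hf S hS]
  exact Finset.prod_congr rfl fun i _ => h1 i

lemma stmt9_summable_rpow (d : ℕ) (hd : d = 2 ∨ d = 3) :
    Summable (fun j : ℕ => ((j : ℝ) + 1) ^ (-(4 : ℝ) / d)) := by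
  have hp : 1 < (4 : ℝ) / d := by rcases hd with h | h <;> subst h <;> norm_num
  have h0 : Summable (fun n : ℕ => 1 / (n : ℝ) ^ ((4 : ℝ) / d)) :=
    Real.summable_one_div_nat_rpow.mpr hp
  have h1 : Summable (fun n : ℕ => 1 / ((n + 1 : ℕ) : ℝ) ^ ((4 : ℝ) / d)) :=
    (summable_nat_add_iff 1).mpr h0
  refine h1.congr fun j => ?_
  push_cast
  rw [neg_div, Real.rpow_neg (by positivity), ← one_div]

lemma stmt9_one_add_rpow_le {α τ : ℝ} (hα : 0 < α) (hτ : 0 < τ) {x : ℝ} (hx0 : 0 < x)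
    (hx : x ≤ τ ^ 2) :
    (1 + x) ^ α - 1 ≤ max α (((1 + τ ^ 2) ^ α - 1) / τ ^ 2) * x := by
  have hτ2 : (0 : ℝ) < τ ^ 2 := by positivity
  rcases le_total α 1 with h1 | h1
  · have hB := rpow_one_add_le_one_add_mul_self (by linarith : (-1 : ℝ) ≤ x) hα.le h1
    have hle : α * x ≤ max α (((1 + τ ^ 2) ^ α - 1) / τ ^ 2) * x :=
      mul_le_mul_of_nonneg_right (le_max_left _ _) hx0.le
    linarith
  · set t := x / τ ^ 2 with htdef
    have ht0 : 0 ≤ t := by positivity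
    have ht1 : t ≤ 1 := (div_le_one hτ2).2 hx
    have hconv := (convexOn_rpow h1).2 (Set.mem_Ici.2 (by norm_num : (0 : ℝ) ≤ 1))
      (Set.mem_Ici.2 (by positivity : (0 : ℝ) ≤ 1 + τ ^ 2))
      (by linarith : (0 : ℝ) ≤ 1 - t) ht0 (by ring)
    simp only [smul_eq_mul, mul_one, Real.one_rpow] at hconv
    have hxeq : (1 - t) * 1 + t * (1 + τ ^ 2) = 1 + x := by
      have htt : t * τ ^ 2 = x := by rw [htdef, div_mul_cancel₀ _ hτ2.ne']
      linear_combination htt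
    rw [mul_one] at hxeq
    rw [hxeq] at hconv
    have htx : t * ((1 + τ ^ 2) ^ α - 1) = (((1 + τ ^ 2) ^ α - 1) / τ ^ 2) * x := by
      rw [htdef]
      ring
    have hle : (((1 + τ ^ 2) ^ α - 1) / τ ^ 2) * x
        ≤ max α (((1 + τ ^ 2) ^ α - 1) / τ ^ 2) * x :=
      mul_le_mul_of_nonneg_right (le_max_right _ _) hx0.le
    nlinarith

lemma stmt9_a_nonneg {α τ : ℝ} (hα : 0 < α) (hτ : 0 < τ) {x : ℝ} (hx0 : 0 < x) :
    0 ≤ (1 + x) ^ α - 1 := by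
  have : (1 : ℝ) ≤ (1 + x) ^ α := Real.one_le_rpow (by linarith) hα.le
  linarith

end Helpers


section Gaussian

lemma stmt9_integrable_pow_mul (n : ℕ) :
    Integrable (fun x : ℝ => x ^ n * Real.exp (-(1 / 2 : ℝ) * x ^ 2)) := by
  have h := integrable_rpow_mul_exp_neg_mul_sq (by norm_num : (0 : ℝ) < 1 / 2)
    (s := (n : ℝ)) (neg_one_lt_zero.trans_le (Nat.cast_nonneg n))
  simpa [Real.rpow_natCast] using h

lemma stmt9_integral_exp : ∫ x : ℝ, Real.exp (-(1 / 2 : ℝ) * x ^ 2) = Real.sqrt (2 * Real.pi) := by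
  rw [integral_gaussian]
  congr 1
  rw [div_div_eq_mul_div, div_one]
  ring

lemma stmt9_integral_sq_mul :
    ∫ x : ℝ, x ^ 2 * Real.exp (-(1 / 2 : ℝ) * x ^ 2) = Real.sqrt (2 * Real.pi) := by
  set e : ℝ → ℝ := fun x => Real.exp (-(1 / 2 : ℝ) * x ^ 2) with he
  have hu : ∀ x : ℝ, HasDerivAt (fun y : ℝ => y) (1 : ℝ) x := fun x => hasDerivAt_id x
  have hv : ∀ x : ℝ, HasDerivAt (fun y : ℝ => -e y) (x * e x) x := by
    intro x
    have h1 : HasDerivAt (fun y : ℝ => -(1 / 2 : ℝ) * y ^ 2) (-x) x := by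
      have := (hasDerivAt_pow 2 x).const_mul (-(1 / 2 : ℝ))
      refine this.congr_deriv ?_
      simp only [Nat.cast_ofNat, show 2 - 1 = 1 from rfl, pow_one]
      ring
    have h2 := h1.exp
    have h3 := h2.neg
    refine HasDerivAt.congr_deriv h3 ?_
    simp only [he]
    ring
  have hint1 : Integrable ((fun y : ℝ => y) * fun x => x * e x) := by
    refine (stmt9_integrable_pow_mul 2).congr ?_
    refine Filter.Eventually.of_forall fun x => ?_
    simp [he]
    ring
  have hint2 : Integrable ((fun _ : ℝ => (1 : ℝ)) * fun y : ℝ => -e y) := by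
    refine ((integrable_exp_neg_mul_sq (by norm_num : (0 : ℝ) < 1 / 2)).neg).congr ?_
    refine Filter.Eventually.of_forall fun x => ?_
    simp [he]
  have hint3 : Integrable ((fun y : ℝ => y) * fun y : ℝ => -e y) := by
    refine ((stmt9_integrable_pow_mul 1).neg).congr ?_
    refine Filter.Eventually.of_forall fun x => ?_
    simp [he]
  have key := integral_mul_deriv_eq_deriv_mul_of_integrable (fun x _ => hu x) (fun x _ => hv x) hint1 hint2 hint3
  have h4 : ∫ x : ℝ, x ^ 2 * e x = ∫ x : ℝ, x * (x * e x) := by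
    congr 1
    ext x
    ring
  rw [h4, key]
  simp only [one_mul, integral_neg, neg_neg]
  exact stmt9_integral_exp

lemma stmt9_pdf_eq (x : ℝ) :
    gaussianPDFReal 0 1 x = (Real.sqrt (2 * Real.pi))⁻¹ * Real.exp (-(1 / 2 : ℝ) * x ^ 2) := by
  rw [gaussianPDFReal]
  rw [show (2 * Real.pi * ((1 : ℝ≥0) : ℝ)) = 2 * Real.pi by norm_num,
    show (-(x - 0) ^ 2 / (2 * ((1 : ℝ≥0) : ℝ))) = -(1 / 2 : ℝ) * x ^ 2 by push_cast; ring]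

end Gaussian


section GaussMeasure

lemma stmt9_gauss_eq_withDensity :
    gaussianReal 0 1
      = MeasureTheory.volume.withDensity
          (fun x => ((gaussianPDFReal 0 1 x).toNNReal : ℝ≥0∞)) := by
  rw [gaussianReal_of_var_ne_zero 0 one_ne_zero]
  rfl

lemma stmt9_pdf_meas : Measurable fun x => (gaussianPDFReal 0 1 x).toNNReal :=
  (measurable_gaussianPDFReal 0 1).real_toNNReal

lemma stmt9_integral_gauss (g : ℝ → ℝ) :
    ∫ x, g x ∂(gaussianReal 0 1) = ∫ x, gaussianPDFReal 0 1 x * g x := by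
  rw [stmt9_gauss_eq_withDensity, integral_withDensity_eq_integral_smul stmt9_pdf_meas g]
  congr 1
  ext x
  rw [NNReal.smul_def, Real.coe_toNNReal _ (gaussianPDFReal_nonneg 0 1 x), smul_eq_mul]

lemma stmt9_integrable_gauss (g : ℝ → ℝ)
    (hg : Integrable (fun x => g x * Real.exp (-(1 / 2 : ℝ) * x ^ 2)) MeasureTheory.volume) :
    Integrable g (gaussianReal 0 1) := by
  rw [stmt9_gauss_eq_withDensity,
    integrable_withDensity_iff (stmt9_pdf_meas.coe_nnreal_ennreal)
      (Filter.Eventually.of_forall fun x => ENNReal.coe_lt_top)]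
  refine (hg.const_mul ((Real.sqrt (2 * Real.pi))⁻¹)).congr ?_
  refine Filter.Eventually.of_forall fun x => ?_
  show (Real.sqrt (2 * Real.pi))⁻¹ * (g x * Real.exp (-(1 / 2 : ℝ) * x ^ 2))
      = g x * (((gaussianPDFReal 0 1 x).toNNReal : ℝ≥0∞)).toReal
  rw [ENNReal.coe_toReal, Real.coe_toNNReal _ (gaussianPDFReal_nonneg 0 1 x), stmt9_pdf_eq]
  ring

lemma stmt9_integrable_sq : Integrable (fun x : ℝ => x ^ 2) (gaussianReal 0 1) := by
  exact stmt9_integrable_gauss _ (stmt9_integrable_pow_mul 2)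

lemma stmt9_integrable_sq_sub_one_sq :
    Integrable (fun x : ℝ => (x ^ 2 - 1) ^ 2) (gaussianReal 0 1) := by
  refine stmt9_integrable_gauss _ ?_
  have h := ((stmt9_integrable_pow_mul 4).sub ((stmt9_integrable_pow_mul 2).const_mul 2)).add
    (integrable_exp_neg_mul_sq (by norm_num : (0 : ℝ) < 1 / 2))
  refine h.congr (Filter.Eventually.of_forall fun x => ?_)
  simp only [Pi.add_apply, Pi.sub_apply]
  ring

lemma stmt9_moment2 : ∫ x, x ^ 2 ∂(gaussianReal 0 1) = 1 := by
  rw [stmt9_integral_gauss]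
  have heq : ∀ x : ℝ, gaussianPDFReal 0 1 x * x ^ 2
      = (Real.sqrt (2 * Real.pi))⁻¹ * (x ^ 2 * Real.exp (-(1 / 2 : ℝ) * x ^ 2)) := by
    intro x
    rw [stmt9_pdf_eq]
    ring
  calc ∫ x, gaussianPDFReal 0 1 x * x ^ 2
      = ∫ x, (Real.sqrt (2 * Real.pi))⁻¹ * (x ^ 2 * Real.exp (-(1 / 2 : ℝ) * x ^ 2)) := by
        congr 1; ext x; exact heq x
    _ = (Real.sqrt (2 * Real.pi))⁻¹ * ∫ x, x ^ 2 * Real.exp (-(1 / 2 : ℝ) * x ^ 2) :=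
        integral_const_mul _ _
    _ = 1 := by
        rw [stmt9_integral_sq_mul]
        refine inv_mul_cancel₀ ?_
        positivity

end GaussMeasure


theorem stmt9_martingale_conv {Ω : Type*} [m0 : MeasurableSpace Ω] (P : Measure Ω)
    [IsProbabilityMeasure P] (Y : ℕ → Ω → ℝ) (hsm : ∀ j, StronglyMeasurable (Y j))
    (hindep : iIndepFun Y P)
    (hmem : ∀ j, MemLp (Y j) 2 P) (hmean : ∀ j, ∫ ω, Y j ω ∂P = 0)
    (V : ℝ) (hV : ∀ n : ℕ, ∑ j ∈ Finset.range n, variance (Y j) P ≤ V) :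
    ∀ᵐ ω ∂P, ∃ c, Tendsto (fun n => ∑ j ∈ Finset.range n, Y j ω) atTop (nhds c) := by
  set ℱ := Filtration.natural Y hsm with hℱ
  have hint : ∀ j, Integrable (Y j) P := fun j => (hmem j).integrable one_le_two
  set f : ℕ → Ω → ℝ := fun n => ∑ j ∈ Finset.range (n + 1), Y j with hfdef
  have hadp : StronglyAdapted ℱ f := by
    intro n
    have hterm : ∀ j ∈ Finset.range (n + 1), StronglyMeasurable[ℱ n] (Y j) := fun j hj =>
      (Filtration.stronglyAdapted_natural hsm j).mono
        (ℱ.mono (Nat.lt_succ_iff.mp (Finset.mem_range.mp hj)))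
    have heq : f n = fun a => ∑ j ∈ Finset.range (n + 1), Y j a :=
      funext fun a => Finset.sum_apply _ _ _
    rw [heq]
    exact Finset.stronglyMeasurable_fun_sum _ hterm
  have hmart : Martingale f ℱ P := by
    refine ⟨hadp, ?_⟩
    intro i j hij
    have hdecomp : f j = f i + ∑ k ∈ Finset.Ico (i + 1) (j + 1), Y k := by
      simp only [hfdef, Finset.range_eq_Ico]
      exact (Finset.sum_Ico_consecutive Y (Nat.zero_le _) (by omega)).symm
    have hTint : Integrable (∑ k ∈ Finset.Ico (i + 1) (j + 1), Y k) P :=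
      integrable_finset_sum' _ fun k _ => hint k
    have hfiint : Integrable (f i) P := integrable_finset_sum' _ fun k _ => hint k
    rw [hdecomp]
    refine (condExp_add hfiint hTint _).trans ?_
    have h1 : P[f i|ℱ i] = f i := condExp_of_stronglyMeasurable (ℱ.le i) (hadp i) hfiint
    have h2 : P[∑ k ∈ Finset.Ico (i + 1) (j + 1), Y k|ℱ i] =ᵐ[P] 0 := by
      refine (condExp_finset_sum (fun k _ => hint k) _).trans ?_
      have h3 : ∀ k ∈ Finset.Ico (i + 1) (j + 1), P[Y k|ℱ i] =ᵐ[P] (fun _ => (0 : ℝ)) := by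
        intro k hk
        have hik : i < k := by have := (Finset.mem_Ico.mp hk).1; omega
        refine (hindep.condExp_natural_ae_eq_of_lt hsm hik).trans ?_
        simp [hmean k]
      refine (eventuallyEq_sum h3).trans ?_
      refine Filter.EventuallyEq.of_eq ?_
      funext x
      simp
    rw [h1]
    filter_upwards [h2] with ω hω
    simp only [Pi.add_apply]
    rw [hω]
    simp
  have hV0 : 0 ≤ V := le_trans (by simp) (hV 0)
  set R : ℝ≥0 := ((1 + V) / 2).toNNReal with hR
  have hbdd : ∀ n, eLpNorm (f n) 1 P ≤ (R : ℝ≥0∞) := by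
    intro n
    have hf2 : MemLp (f n) 2 P := memLp_finset_sum' _ fun j _ => hmem j
    have hfint : Integrable (f n) P := integrable_finset_sum' _ fun j _ => hint j
    have hsqint : Integrable (fun ω => f n ω ^ 2) P :=
      (memLp_two_iff_integrable_sq hf2.aestronglyMeasurable).1 hf2
    have hmeanf : ∫ ω, f n ω ∂P = 0 := by
      have h4 : ∫ ω, f n ω ∂P = ∑ j ∈ Finset.range (n + 1), ∫ ω, Y j ω ∂P := by
        simp only [hfdef, Finset.sum_apply]
        exact integral_finset_sum _ fun j _ => hint j
      rw [h4]
      simp [hmean]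
    have hvar : variance (f n) P = ∑ j ∈ Finset.range (n + 1), variance (Y j) P :=
      IndepFun.variance_sum (fun j _ => hmem j) fun j _ k _ hjk => hindep.indepFun hjk
    have hsq : ∫ ω, f n ω ^ 2 ∂P ≤ V := by
      have hd := variance_eq_sub hf2
      have h5 : ∫ x, ((f n) ^ 2) x ∂P = ∫ ω, f n ω ^ 2 ∂P := by
        simp [Pi.pow_apply]
      rw [h5, hmeanf] at hd
      have h6 : ∫ ω, f n ω ^ 2 ∂P = variance (f n) P := by rw [hd]; ring
      rw [h6, hvar]
      exact hV (n + 1)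
    have hptw : ∀ ω, ‖f n ω‖ ≤ (1 + f n ω ^ 2) / 2 := by
      intro ω
      rw [Real.norm_eq_abs]
      nlinarith [sq_nonneg (|f n ω| - 1), sq_abs (f n ω), abs_nonneg (f n ω)]
    have hintR : Integrable (fun ω => (1 + f n ω ^ 2) / 2) P :=
      ((integrable_const (1 : ℝ)).add hsqint).div_const 2
    have hnorm : ∫ ω, ‖f n ω‖ ∂P ≤ (1 + V) / 2 := by
      calc ∫ ω, ‖f n ω‖ ∂P ≤ ∫ ω, (1 + f n ω ^ 2) / 2 ∂P :=
            integral_mono hfint.norm hintR hptw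
        _ = (1 + ∫ ω, f n ω ^ 2 ∂P) / 2 := by
            rw [integral_div, integral_add (integrable_const 1) hsqint]
            simp
        _ ≤ (1 + V) / 2 := by linarith
    calc eLpNorm (f n) 1 P = ENNReal.ofReal (∫ ω, ‖f n ω‖ ∂P) := by
          rw [eLpNorm_one_eq_lintegral_enorm, ← ofReal_integral_norm_eq_lintegral_enorm hfint]
      _ ≤ ENNReal.ofReal ((1 + V) / 2) := ENNReal.ofReal_le_ofReal hnorm
      _ = (R : ℝ≥0∞) := rfl
  filter_upwards [hmart.submartingale.exists_ae_tendsto_of_bdd hbdd] with ω hc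
  obtain ⟨c, hc⟩ := hc
  refine ⟨c, ?_⟩
  rw [← tendsto_add_atTop_iff_nat 1]
  have heq : ∀ n, f n ω = ∑ j ∈ Finset.range (n + 1), Y j ω := fun n => Finset.sum_apply _ _ _
  exact Tendsto.congr heq hc


/-- For `d ∈ {2,3}`, with `a_j = (1 + τ² j^{-2/d})^α − 1 ≥ 0` and `b_j = log(1 + a_j)`,
and `{ξ_j}` i.i.d. standard Gaussians, the series `∑ [a_j ξ_j² − b_j]`
converges almost surely. -/
theorem stmt_9 {Ω : Type*} [MeasurableSpace Ω] (P : Measure Ω) [IsProbabilityMeasure P]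
    (ξ : ℕ → Ω → ℝ)
    (hindep : iIndepFun ξ P)
    (hdist : ∀ j, Measure.map (ξ j) P = gaussianReal 0 1)
    (d : ℕ) (hd : d = 2 ∨ d = 3) (α τ : ℝ) (hα : 0 < α) (hτ : 0 < τ)
    (a b : ℕ → ℝ)
    (ha : ∀ j, a j = (1 + τ ^ 2 * ((j : ℝ) + 1) ^ (-(2 : ℝ) / d)) ^ α - 1)
    (hb : ∀ j, b j = Real.log (1 + a j)) :
    ∀ᵐ ω ∂P, ∃ L : ℝ,
      Tendsto (fun n => ∑ j ∈ Finset.range n, (a j * (ξ j ω) ^ 2 - b j)) atTop (nhds L) := by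
  -- measurable modifications
  have hae : ∀ j, AEMeasurable (ξ j) P := by
    intro j
    by_contra h
    have h0 := Measure.map_of_not_aemeasurable h
    rw [hdist j] at h0
    exact (IsProbabilityMeasure.ne_zero (gaussianReal 0 1)) h0
  set ξ' : ℕ → Ω → ℝ := fun j => (hae j).mk (ξ j) with hξ'
  have hξm : ∀ j, Measurable (ξ' j) := fun j => (hae j).measurable_mk
  have hξeq : ∀ j, ξ j =ᵐ[P] ξ' j := fun j => (hae j).ae_eq_mk
  have hdist' : ∀ j, Measure.map (ξ' j) P = gaussianReal 0 1 := fun j => by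
    rw [← Measure.map_congr (hξeq j), hdist j]
  have hindep' : iIndepFun ξ' P :=
    stmt9_iIndepFun_congr_ae hξeq hindep
  -- properties of a
  have h2d : (0 : ℝ) < d := by rcases hd with h | h <;> subst h <;> norm_num
  set r : ℕ → ℝ := fun j => ((j : ℝ) + 1) ^ (-(2 : ℝ) / d) with hr
  have hrpos : ∀ j, 0 < r j := fun j => Real.rpow_pos_of_pos (by positivity) _
  have hrle : ∀ j, r j ≤ 1 := by
    intro j
    refine Real.rpow_le_one_of_one_le_of_nonpos ?_ ?_
    · have : (0 : ℝ) ≤ (j : ℝ) := Nat.cast_nonneg j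
      linarith
    · apply div_nonpos_of_nonpos_of_nonneg <;> [norm_num; positivity]
  have ha0 : ∀ j, 0 ≤ a j := by
    intro j
    rw [ha j]
    exact stmt9_a_nonneg hα hτ (by positivity)
  set C : ℝ := τ ^ 2 * max α (((1 + τ ^ 2) ^ α - 1) / τ ^ 2) with hC
  have haC : ∀ j, a j ≤ C * r j := by
    intro j
    rw [ha j]
    have hx0 : 0 < τ ^ 2 * r j := by positivity
    have hx1 : τ ^ 2 * r j ≤ τ ^ 2 := by nlinarith [hrle j, hrpos j]
    calc (1 + τ ^ 2 * r j) ^ α - 1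
        ≤ max α (((1 + τ ^ 2) ^ α - 1) / τ ^ 2) * (τ ^ 2 * r j) :=
          stmt9_one_add_rpow_le hα hτ hx0 hx1
      _ = C * r j := by rw [hC]; ring
  have har2 : ∀ j, (a j) ^ 2 ≤ C ^ 2 * (((j : ℝ) + 1) ^ (-(4 : ℝ) / d)) := by
    intro j
    have h1 : (a j) ^ 2 ≤ (C * r j) ^ 2 := by nlinarith [haC j, ha0 j]
    have h2 : (r j) ^ 2 = ((j : ℝ) + 1) ^ (-(4 : ℝ) / d) := by
      rw [hr]
      rw [← Real.rpow_natCast (((j : ℝ) + 1) ^ (-(2 : ℝ) / d)) 2,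
        ← Real.rpow_mul (by positivity)]
      congr 1
      push_cast
      ring
    calc (a j) ^ 2 ≤ (C * r j) ^ 2 := h1
      _ = C ^ 2 * (r j) ^ 2 := by ring
      _ = C ^ 2 * (((j : ℝ) + 1) ^ (-(4 : ℝ) / d)) := by rw [h2]
  have hsummable_a2 : Summable (fun j => (a j) ^ 2) :=
    Summable.of_nonneg_of_le (fun j => sq_nonneg _) har2
      ((stmt9_summable_rpow d hd).mul_left (C ^ 2))
  -- the deterministic series
  have hab0 : ∀ j, 0 ≤ a j - b j := by
    intro j
    rw [hb j]
    have := Real.log_le_sub_one_of_pos (show (0 : ℝ) < 1 + a j by linarith [ha0 j])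
    linarith
  have hab2 : ∀ j, a j - b j ≤ (a j) ^ 2 := by
    intro j
    have h1a : (0 : ℝ) < 1 + a j := by linarith [ha0 j]
    have hlog := Real.log_le_sub_one_of_pos (inv_pos.2 h1a)
    rw [Real.log_inv] at hlog
    rw [hb j]
    have h2 : a j + (1 + a j)⁻¹ - 1 = (a j) ^ 2 / (1 + a j) := by
      field_simp
      ring
    have h3 : (a j) ^ 2 / (1 + a j) ≤ (a j) ^ 2 :=
      div_le_self (sq_nonneg _) (by linarith [ha0 j])
    linarith
  have hsummable_ab : Summable (fun j => a j - b j) :=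
    Summable.of_nonneg_of_le hab0 hab2 hsummable_a2
  -- the centered process
  set Y : ℕ → Ω → ℝ := fun j ω => a j * ((ξ' j ω) ^ 2 - 1) with hY
  have hYm : ∀ j, StronglyMeasurable (Y j) := fun j =>
    ((((hξm j).pow_const 2).sub measurable_const).const_mul (a j)).stronglyMeasurable
  have hYindep : iIndepFun Y P := by
    exact hindep'.comp (fun j x => a j * (x ^ 2 - 1))
      (fun j => ((measurable_id.pow_const 2).sub measurable_const).const_mul (a j))
  have hint_sq : ∀ j, Integrable (fun ω => (ξ' j ω) ^ 2) P := by
    intro j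
    have h1 : Integrable (fun x : ℝ => x ^ 2) (Measure.map (ξ' j) P) := by
      rw [hdist' j]; exact stmt9_integrable_sq
    exact (integrable_map_measure ((measurable_id.pow_const 2).aestronglyMeasurable)
      (hξm j).aemeasurable).1 h1
  have hint_sq2 : ∀ j, Integrable (fun ω => ((ξ' j ω) ^ 2 - 1) ^ 2) P := by
    intro j
    have h1 : Integrable (fun x : ℝ => (x ^ 2 - 1) ^ 2) (Measure.map (ξ' j) P) := by
      rw [hdist' j]; exact stmt9_integrable_sq_sub_one_sq
    exact (integrable_map_measure
      ((((measurable_id.pow_const 2).sub measurable_const).pow_const 2).aestronglyMeasurable)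
      (hξm j).aemeasurable).1 h1
  have hmoment : ∀ j, ∫ ω, (ξ' j ω) ^ 2 ∂P = 1 := by
    intro j
    have h1 := integral_map (μ := P) (hξm j).aemeasurable
      (f := fun x : ℝ => x ^ 2) ((measurable_id.pow_const 2).aestronglyMeasurable)
    rw [hdist' j, stmt9_moment2] at h1
    exact h1.symm
  have hYint : ∀ j, Integrable (Y j) P := fun j =>
    ((hint_sq j).sub (integrable_const 1)).const_mul (a j)
  have hYmean : ∀ j, ∫ ω, Y j ω ∂P = 0 := by
    intro j
    have h1 : ∫ ω, Y j ω ∂P = a j * ∫ ω, ((ξ' j ω) ^ 2 - 1) ∂P := integral_const_mul _ _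
    rw [h1, integral_sub (hint_sq j) (integrable_const 1), hmoment j]
    simp
  have hYmem : ∀ j, MemLp (Y j) 2 P := by
    intro j
    refine (memLp_two_iff_integrable_sq (hYm j).aestronglyMeasurable).2 ?_
    refine (((hint_sq2 j).const_mul ((a j) ^ 2)).congr
      (Filter.Eventually.of_forall fun ω => ?_))
    simp only [hY]
    ring
  set K : ℝ := ∫ x, (x ^ 2 - 1) ^ 2 ∂(gaussianReal 0 1) with hK
  have hK0 : 0 ≤ K := integral_nonneg fun x => sq_nonneg _
  have hYvar : ∀ j, variance (Y j) P = (a j) ^ 2 * K := by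
    intro j
    rw [variance_eq_sub (hYmem j)]
    have h2 : ∫ ω, ((ξ' j ω) ^ 2 - 1) ^ 2 ∂P = K := by
      have h3 := integral_map (μ := P) (hξm j).aemeasurable
        (f := fun x : ℝ => (x ^ 2 - 1) ^ 2)
        ((((measurable_id.pow_const 2).sub measurable_const).pow_const 2).aestronglyMeasurable)
      rw [hdist' j] at h3
      rw [hK, ← h3]
    have h1 : ∫ x, ((Y j) ^ 2) x ∂P = (a j) ^ 2 * K := by
      calc ∫ x, ((Y j) ^ 2) x ∂P = ∫ ω, (a j) ^ 2 * ((ξ' j ω) ^ 2 - 1) ^ 2 ∂P := by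
            congr 1
            ext ω
            simp only [Pi.pow_apply, hY]
            ring
        _ = (a j) ^ 2 * ∫ ω, ((ξ' j ω) ^ 2 - 1) ^ 2 ∂P := integral_const_mul _ _
        _ = (a j) ^ 2 * K := by rw [h2]
    rw [h1, hYmean j]
    ring
  set S : ℝ := ∑' j, (a j) ^ 2 with hS
  have hVbound : ∀ n, ∑ j ∈ Finset.range n, variance (Y j) P ≤ K * S := by
    intro n
    calc ∑ j ∈ Finset.range n, variance (Y j) P
        = ∑ j ∈ Finset.range n, (a j) ^ 2 * K :=
          Finset.sum_congr rfl fun j _ => hYvar j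
      _ = (∑ j ∈ Finset.range n, (a j) ^ 2) * K := by rw [Finset.sum_mul]
      _ ≤ S * K := mul_le_mul_of_nonneg_right
          (Summable.sum_le_tsum _ (fun j _ => sq_nonneg _) hsummable_a2) hK0
      _ = K * S := mul_comm _ _
  have hconvY := stmt9_martingale_conv P Y hYm hYindep hYmem hYmean (K * S) hVbound
  have htends_ab : Tendsto (fun n => ∑ j ∈ Finset.range n, (a j - b j)) atTop
      (nhds (∑' j, (a j - b j))) := hsummable_ab.hasSum.tendsto_sum_nat
  have hxiae : ∀ᵐ ω ∂P, ∀ j, ξ j ω = ξ' j ω := ae_all_iff.2 hξeq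
  filter_upwards [hconvY, hxiae] with ω hc hξω
  obtain ⟨c, hc⟩ := hc
  refine ⟨c + ∑' j, (a j - b j), ?_⟩
  have heq : ∀ n, (∑ j ∈ Finset.range n, Y j ω) + ∑ j ∈ Finset.range n, (a j - b j)
      = ∑ j ∈ Finset.range n, (a j * (ξ j ω) ^ 2 - b j) := by
    intro n
    rw [← Finset.sum_add_distrib]
    refine Finset.sum_congr rfl fun j _ => ?_
    rw [hξω j]
    simp only [hY]
    ring
  exact Tendsto.congr heq (hc.add htends_ab)
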